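/- arXiv:2103.04898 — 3 statements merged into one kernel-verified Lean document; each statement's English description precedes it below -/
import Mathlib

section
/- Suppose asset j is dominant, and assume the high-frequency maximality property holds: g_n(K') ≤ g_1* for every n ≥ 1 and every K' ∈ 𝒦, where g_1* = E[log(1 + X_j(0))]. Then for every K ∈ 𝒦 with K_j > 0 and every n ≥ 1, the optimality gap satisfies 0 ≤ g_1* − g_n(K) ≤ (1/n)·( log(1/K_j) − 1 + K_j·E[ R_{n,j} / (Kᵀ R_n) ] ); consequently lim_{n → ∞} g_n(K) = g_1*. -/
open MeasureTheory ProbabilityTheory Filter Topology Finset Real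

/-- Compound (total) return of asset `i` over the first `n` periods:
`R_{n,i}(ω) = ∏_{k=0}^{n-1} (1 + X_i(k)(ω))`. -/
noncomputable def compoundReturn {Ω : Type*} {m : ℕ} (X : ℕ → Ω → Fin m → ℝ)
    (n : ℕ) (ω : Ω) (i : Fin m) : ℝ :=
  ∏ k ∈ Finset.range n, (1 + X k ω i)

/-- Expected logarithmic growth with rebalancing period `n`:
`g_n(K) = (1/n) E[log (Kᵀ R_n)]`. -/
noncomputable def elg {Ω : Type*} [MeasureSpace Ω] {m : ℕ} (X : ℕ → Ω → Fin m → ℝ)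
    (n : ℕ) (K : Fin m → ℝ) : ℝ :=
  (n : ℝ)⁻¹ * ∫ ω, Real.log (∑ i, K i * compoundReturn X n ω i)

/-- The admissible set: the unit simplex in `ℝ^m`. -/
def simplex (m : ℕ) : Set (Fin m → ℝ) := {K | (∀ i, 0 ≤ K i) ∧ ∑ i, K i = 1}

/-- **Improved asymptotic log-optimality of buy and hold.** If asset `j` is dominant and the
high-frequency maximality property holds (`g_n(K') ≤ g_1^*` for all `n ≥ 1`, `K' ∈ 𝒦`), then
for every `K ∈ 𝒦` with `K_j > 0` the gap satisfies
`0 ≤ g_1^* - g_n(K) ≤ (1/n)(log(1/K_j) - 1 + K_j · E[R_{n,j}/(Kᵀ R_n)])`, and consequently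
`g_n(K) → g_1^*`. -/
theorem improved_asymptotic_log_optimality
    {Ω : Type*} [MeasureSpace Ω] [IsProbabilityMeasure (ℙ : Measure Ω)]
    {m : ℕ} (hm : 2 ≤ m)
    (X : ℕ → Ω → Fin m → ℝ)
    (hmeas : ∀ k, Measurable (X k))
    (hiid : iIndepFun X ℙ)
    (hident : ∀ k, IdentDistrib (X k) (X 0) ℙ ℙ)
    (Xmin Xmax : Fin m → ℝ)
    (hXmin : ∀ i, -1 < Xmin i)
    (hbdd : ∀ k, ∀ᵐ ω ∂(ℙ : Measure Ω), ∀ i, Xmin i ≤ X k ω i ∧ X k ω i ≤ Xmax i)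
    (j : Fin m)
    (hdom : ∀ i, i ≠ j → ∫ ω, (1 + X 0 ω i) / (1 + X 0 ω j) ≤ 1)
    (hmax : ∀ n : ℕ, 1 ≤ n → ∀ K' ∈ simplex m,
      elg X n K' ≤ ∫ ω, Real.log (1 + X 0 ω j))
    (K : Fin m → ℝ) (hK : K ∈ simplex m) (hKj : 0 < K j) :
    (∀ n : ℕ, 1 ≤ n →
      0 ≤ (∫ ω, Real.log (1 + X 0 ω j)) - elg X n K ∧
      (∫ ω, Real.log (1 + X 0 ω j)) - elg X n K ≤
        (n : ℝ)⁻¹ * (Real.log (1 / K j) - 1 +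
          K j * ∫ ω, compoundReturn X n ω j / ∑ i, K i * compoundReturn X n ω i)) ∧
    Tendsto (fun n : ℕ => elg X n K) atTop (𝓝 (∫ ω, Real.log (1 + X 0 ω j))) := by
  classical
  obtain ⟨hK0, hK1⟩ := hK
  set g1 : ℝ := ∫ ω, Real.log (1 + X 0 ω j) with hg1
  -- basic measurability
  have hXmeas : ∀ k i, Measurable (fun ω => X k ω i) := fun k i =>
    (measurable_pi_apply i).comp (hmeas k)
  have hRmeas : ∀ n i, Measurable (fun ω => compoundReturn X n ω i) := by
    intro n i
    unfold compoundReturn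
    exact Finset.measurable_prod _ fun k _ => measurable_const.add (hXmeas k i)
  have hSmeas : ∀ n, Measurable (fun ω => ∑ i, K i * compoundReturn X n ω i) := fun n =>
    Finset.measurable_sum _ fun i _ => ((hRmeas n i).const_mul _)
  -- bounds
  set a : Fin m → ℝ := fun i => 1 + Xmin i with ha_def
  set b : Fin m → ℝ := fun i => 1 + max (Xmax i) (Xmin i) with hb_def
  have ha : ∀ i, 0 < a i := fun i => by have := hXmin i; simp only [ha_def]; linarith
  have hab : ∀ i, a i ≤ b i := fun i => by
    simp only [ha_def, hb_def]; have := le_max_right (Xmax i) (Xmin i); linarith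
  have hb : ∀ i, 0 < b i := fun i => lt_of_lt_of_le (ha i) (hab i)
  have hbdd' : ∀ᵐ ω ∂(ℙ : Measure Ω), ∀ k i, Xmin i ≤ X k ω i ∧ X k ω i ≤ Xmax i :=
    (ae_all_iff).2 hbdd
  have hfac : ∀ᵐ ω ∂(ℙ : Measure Ω), ∀ k i, a i ≤ 1 + X k ω i ∧ 1 + X k ω i ≤ b i := by
    filter_upwards [hbdd'] with ω hω k i
    obtain ⟨h1, h2⟩ := hω k i
    constructor
    · simp only [ha_def]; linarith
    · simp only [hb_def]; have := le_max_left (Xmax i) (Xmin i); linarith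
  have hprod : ∀ᵐ ω ∂(ℙ : Measure Ω), ∀ n i,
      a i ^ n ≤ compoundReturn X n ω i ∧ compoundReturn X n ω i ≤ b i ^ n := by
    filter_upwards [hfac] with ω hω n i
    constructor
    · calc a i ^ n = ∏ _k ∈ Finset.range n, a i := by rw [Finset.prod_const, card_range]
        _ ≤ ∏ k ∈ Finset.range n, (1 + X k ω i) :=
          Finset.prod_le_prod (fun k _ => (ha i).le) (fun k _ => (hω k i).1)
    · calc compoundReturn X n ω i ≤ ∏ _k ∈ Finset.range n, b i :=
          Finset.prod_le_prod (fun k _ => le_trans (ha i).le (hω k i).1)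
            (fun k _ => (hω k i).2)
        _ = b i ^ n := by rw [Finset.prod_const, card_range]
  -- identically distributed log returns
  have hident' : ∀ k, (∫ ω, Real.log (1 + X k ω j)) = g1 := by
    intro k
    have h := (hident k).comp
      (u := fun v : Fin m → ℝ => Real.log (1 + v j))
      (Real.measurable_log.comp (measurable_const.add (measurable_pi_apply j)))
    exact h.integral_eq
  -- integrability of single-period log returns
  have intLog1X : ∀ k, Integrable (fun ω => Real.log (1 + X k ω j)) ℙ := by
    intro k
    refine ⟨(Real.measurable_log.comp (measurable_const.add (hXmeas k j))).aestronglyMeasurable, ?_⟩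
    apply HasFiniteIntegral.of_bounded (C := max |Real.log (a j)| |Real.log (b j)|)
    filter_upwards [hfac] with ω hω
    obtain ⟨h1, h2⟩ := hω k j
    rw [Real.norm_eq_abs, abs_le]
    have hl1 : Real.log (a j) ≤ Real.log (1 + X k ω j) :=
      Real.log_le_log (ha j) h1
    have hl2 : Real.log (1 + X k ω j) ≤ Real.log (b j) :=
      Real.log_le_log (lt_of_lt_of_le (ha j) h1) h2
    have := neg_abs_le (Real.log (a j))
    have := le_abs_self (Real.log (b j))
    have := le_max_left |Real.log (a j)| |Real.log (b j)|
    have := le_max_right |Real.log (a j)| |Real.log (b j)|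
    constructor <;> linarith
  -- main per-n facts
  have main : ∀ n : ℕ, 1 ≤ n →
      (0 ≤ g1 - elg X n K) ∧
      (g1 - elg X n K ≤ (n : ℝ)⁻¹ * (Real.log (1 / K j) - 1 +
        K j * ∫ ω, compoundReturn X n ω j / ∑ i, K i * compoundReturn X n ω i)) ∧
      (g1 - elg X n K ≤ (n : ℝ)⁻¹ * Real.log (1 / K j)) := by
    intro n hn
    have hnR : (0 : ℝ) < (n : ℝ) := by exact_mod_cast hn
    set R : Ω → ℝ := fun ω => compoundReturn X n ω j with hRdef
    set S : Ω → ℝ := fun ω => ∑ i, K i * compoundReturn X n ω i with hSdef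
    -- a.e. bounds on S and R
    have hKj1 : K j ≤ 1 := by
      have := Finset.single_le_sum (f := K) (fun i _ => hK0 i) (Finset.mem_univ j)
      linarith [hK1 ▸ this]
    have haeS : ∀ᵐ ω ∂(ℙ : Measure Ω),
        (a j ^ n ≤ R ω ∧ R ω ≤ b j ^ n) ∧
        (K j * a j ^ n ≤ S ω ∧ S ω ≤ ∑ i, b i ^ n) ∧ K j * R ω ≤ S ω := by
      filter_upwards [hprod] with ω hω
      have hRb := hω n j
      refine ⟨hRb, ⟨?_, ?_⟩, ?_⟩
      · calc K j * a j ^ n ≤ K j * R ω := by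
              exact mul_le_mul_of_nonneg_left hRb.1 (hKj.le)
          _ ≤ S ω := Finset.single_le_sum
              (f := fun i => K i * compoundReturn X n ω i)
              (fun i _ => mul_nonneg (hK0 i) (le_trans (pow_nonneg (ha i).le n) (hω n i).1))
              (Finset.mem_univ j)
      · apply Finset.sum_le_sum
        intro i _
        calc K i * compoundReturn X n ω i ≤ 1 * (b i ^ n) := by
              apply mul_le_mul _ (hω n i).2
                (le_trans (pow_nonneg (ha i).le n) (hω n i).1) zero_le_one
              have := Finset.single_le_sum (f := K) (fun i' _ => hK0 i') (Finset.mem_univ i)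
              linarith [hK1 ▸ this]
          _ = b i ^ n := one_mul _
      · exact Finset.single_le_sum
          (f := fun i => K i * compoundReturn X n ω i)
          (fun i _ => mul_nonneg (hK0 i) (le_trans (pow_nonneg (ha i).le n) (hω n i).1))
          (Finset.mem_univ j)
    have hLpos : 0 < K j * a j ^ n := mul_pos hKj (pow_pos (ha j) n)
    have hUpos : (0:ℝ) < ∑ i, b i ^ n := by
      have : (0:ℝ) < m := by positivity
      have hne : Nonempty (Fin m) := Fin.pos_iff_nonempty.mp (by omega)
      apply Finset.sum_pos (fun i _ => pow_pos (hb i) n)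
      exact Finset.univ_nonempty
    -- integrability
    have intLogS : Integrable (fun ω => Real.log (S ω)) ℙ := by
      refine ⟨(Real.measurable_log.comp (hSmeas n)).aestronglyMeasurable, ?_⟩
      apply HasFiniteIntegral.of_bounded
        (C := max |Real.log (K j * a j ^ n)| |Real.log (∑ i, b i ^ n)|)
      filter_upwards [haeS] with ω hω
      obtain ⟨_, ⟨h1, h2⟩, _⟩ := hω
      rw [Real.norm_eq_abs, abs_le]
      have hl1 : Real.log (K j * a j ^ n) ≤ Real.log (S ω) := Real.log_le_log hLpos h1
      have hl2 : Real.log (S ω) ≤ Real.log (∑ i, b i ^ n) :=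
        Real.log_le_log (lt_of_lt_of_le hLpos h1) h2
      have := neg_abs_le (Real.log (K j * a j ^ n))
      have := le_abs_self (Real.log (∑ i, b i ^ n))
      have := le_max_left |Real.log (K j * a j ^ n)| |Real.log (∑ i, b i ^ n)|
      have := le_max_right |Real.log (K j * a j ^ n)| |Real.log (∑ i, b i ^ n)|
      constructor <;> linarith
    have intRatio : Integrable (fun ω => R ω / S ω) ℙ := by
      refine ⟨((hRmeas n j).div (hSmeas n)).aestronglyMeasurable, ?_⟩
      apply HasFiniteIntegral.of_bounded (C := 1 / K j)
      filter_upwards [haeS] with ω hω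
      obtain ⟨⟨hR1, _⟩, ⟨hS1, _⟩, hKRS⟩ := hω
      have hRpos : 0 < R ω := lt_of_lt_of_le (pow_pos (ha j) n) hR1
      have hSpos : 0 < S ω := lt_of_lt_of_le hLpos hS1
      rw [Real.norm_eq_abs, abs_of_nonneg (div_nonneg hRpos.le hSpos.le)]
      rw [div_le_div_iff₀ hSpos hKj]
      calc R ω * K j = K j * R ω := mul_comm _ _
        _ ≤ S ω := hKRS
        _ = 1 * S ω := (one_mul _).symm
    -- ∫ log R = n * g1
    have hlogprod : (fun ω => Real.log (R ω)) =ᵐ[ℙ]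
        (fun ω => ∑ k ∈ Finset.range n, Real.log (1 + X k ω j)) := by
      filter_upwards [hfac] with ω hω
      simp only [hRdef]
      unfold compoundReturn
      rw [Real.log_prod]
      intro k _
      exact ne_of_gt (lt_of_lt_of_le (ha j) (hω k j).1)
    have intLogR : Integrable (fun ω => Real.log (R ω)) ℙ := by
      refine (integrable_finset_sum (Finset.range n)
        (fun k _ => intLog1X k)).congr hlogprod.symm
    have keyR : ∫ ω, Real.log (R ω) = (n : ℝ) * g1 := by
      rw [integral_congr_ae hlogprod,
        integral_finset_sum _ (fun k _ => intLog1X k)]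
      rw [Finset.sum_congr rfl (fun k _ => hident' k), Finset.sum_const, card_range,
        nsmul_eq_mul]
    -- gap identity
    have gapEq : g1 - elg X n K = (n : ℝ)⁻¹ * ∫ ω, (Real.log (R ω) - Real.log (S ω)) := by
      rw [integral_sub intLogR intLogS, keyR]
      simp only [elg, hSdef]
      field_simp
    -- pointwise bound
    have aeBound : ∀ᵐ ω ∂(ℙ : Measure Ω),
        Real.log (R ω) - Real.log (S ω) ≤ Real.log (1 / K j) - 1 + K j * (R ω / S ω) := by
      filter_upwards [haeS] with ω hω
      obtain ⟨⟨hR1, _⟩, ⟨hS1, _⟩, hKRS⟩ := hω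
      have hRpos : 0 < R ω := lt_of_lt_of_le (pow_pos (ha j) n) hR1
      have hSpos : 0 < S ω := lt_of_lt_of_le hLpos hS1
      have h1 : Real.log (K j * R ω / S ω) ≤ K j * R ω / S ω - 1 :=
        Real.log_le_sub_one_of_pos (div_pos (mul_pos hKj hRpos) hSpos)
      have h2 : Real.log (K j * R ω / S ω) =
          Real.log (K j) + Real.log (R ω) - Real.log (S ω) := by
        rw [Real.log_div (ne_of_gt (mul_pos hKj hRpos)) (ne_of_gt hSpos),
          Real.log_mul (ne_of_gt hKj) (ne_of_gt hRpos)]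
      have h3 : Real.log (1 / K j) = -Real.log (K j) := by
        rw [one_div, Real.log_inv]
      have h4 : K j * R ω / S ω = K j * (R ω / S ω) := mul_div_assoc _ _ _
      rw [h3]
      rw [h2, h4] at h1
      linarith
    -- integral of RHS
    have intRHS : Integrable
        (fun ω => Real.log (1 / K j) - 1 + K j * (R ω / S ω)) ℙ :=
      (integrable_const _).add (intRatio.const_mul _)
    have intBound : ∫ ω, (Real.log (R ω) - Real.log (S ω)) ≤
        Real.log (1 / K j) - 1 + K j * ∫ ω, R ω / S ω := by
      calc ∫ ω, (Real.log (R ω) - Real.log (S ω)) ≤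
          ∫ ω, (Real.log (1 / K j) - 1 + K j * (R ω / S ω)) :=
            integral_mono_ae (intLogR.sub intLogS) intRHS aeBound
        _ = Real.log (1 / K j) - 1 + K j * ∫ ω, R ω / S ω := by
            rw [integral_add (integrable_const _) (intRatio.const_mul _),
              integral_const, MeasureTheory.integral_const_mul]
            simp [measure_univ]
    have ratioBound : ∫ ω, R ω / S ω ≤ 1 / K j := by
      calc ∫ ω, R ω / S ω ≤ ∫ _ω, 1 / K j :=
            integral_mono_ae intRatio (integrable_const _) (by
              filter_upwards [haeS] with ω hω
              obtain ⟨⟨hR1, _⟩, ⟨hS1, _⟩, hKRS⟩ := hω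
              have hRpos : 0 < R ω := lt_of_lt_of_le (pow_pos (ha j) n) hR1
              have hSpos : 0 < S ω := lt_of_lt_of_le hLpos hS1
              rw [div_le_div_iff₀ hSpos hKj]
              calc R ω * K j = K j * R ω := mul_comm _ _
                _ ≤ S ω := hKRS
                _ = 1 * S ω := (one_mul _).symm)
        _ = 1 / K j := by simp [measure_univ]
    refine ⟨?_, ?_, ?_⟩
    · have := hmax n hn K ⟨hK0, hK1⟩
      simp only [hg1]
      linarith
    · rw [gapEq]
      exact mul_le_mul_of_nonneg_left intBound (by positivity)
    · rw [gapEq]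
      have h5 : ∫ ω, (Real.log (R ω) - Real.log (S ω)) ≤ Real.log (1 / K j) := by
        have : K j * ∫ ω, R ω / S ω ≤ 1 := by
          have := mul_le_mul_of_nonneg_left ratioBound hKj.le
          rwa [mul_one_div, div_self (ne_of_gt hKj)] at this
        linarith
      exact mul_le_mul_of_nonneg_left h5 (by positivity)
  refine ⟨fun n hn => ⟨(main n hn).1, (main n hn).2.1⟩, ?_⟩
  -- convergence
  have hgap0 : Tendsto (fun n : ℕ => g1 - elg X n K) atTop (𝓝 0) := by
    have hub : Tendsto (fun n : ℕ => (n : ℝ)⁻¹ * Real.log (1 / K j)) atTop (𝓝 0) := by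
      have := tendsto_inv_atTop_nhds_zero_nat.mul_const (Real.log (1 / K j))
      simpa using this
    refine squeeze_zero' ?_ ?_ hub
    · filter_upwards [eventually_ge_atTop 1] with n hn
      exact (main n hn).1
    · filter_upwards [eventually_ge_atTop 1] with n hn
      exact (main n hn).2.2
  have := tendsto_const_nhds (x := g1) (f := atTop (α := ℕ)) |>.sub hgap0
  simpa using this
end

section
/- (Rebalancing Criterion) Suppose asset j is dominant, assume the high-frequency maximality property g_n(K') ≤ g_1* for every n ≥ 1 and every K' ∈ 𝒦, and let K ∈ 𝒦 with K_j > 0. Then for every ε ∈ (0, log(1/K_j)), taking n* := ⌈(1/ε)·log(1/K_j)⌉ (an integer ≥ 1), one has for all n ≥ n*: 0 ≤ g_1* − g_n(K) ≤ ε, where g_1* = E[log(1 + X_j(0))]. -/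
open MeasureTheory ProbabilityTheory Filter Topology Finset Real

/-- **Rebalancing criterion.** Suppose asset `j` is dominant, high-frequency maximality holds,
`K ∈ 𝒦` with `K_j > 0`, and `ε ∈ (0, log(1/K_j))`. Then with `n* = ⌈(1/ε)·log(1/K_j)⌉` (an
integer `≥ 1`), for all `n ≥ n*` one has `0 ≤ g_1^* - g_n(K) ≤ ε`. -/
theorem rebalancing_criterion
    {Ω : Type*} [MeasureSpace Ω] [IsProbabilityMeasure (ℙ : Measure Ω)]
    {m : ℕ} (hm : 2 ≤ m)
    (X : ℕ → Ω → Fin m → ℝ)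
    (hmeas : ∀ k, Measurable (X k))
    (hiid : iIndepFun X ℙ)
    (hident : ∀ k, IdentDistrib (X k) (X 0) ℙ ℙ)
    (Xmin Xmax : Fin m → ℝ)
    (hXmin : ∀ i, -1 < Xmin i)
    (hbdd : ∀ k, ∀ᵐ ω ∂(ℙ : Measure Ω), ∀ i, Xmin i ≤ X k ω i ∧ X k ω i ≤ Xmax i)
    (j : Fin m)
    (hdom : ∀ i, i ≠ j → ∫ ω, (1 + X 0 ω i) / (1 + X 0 ω j) ≤ 1)
    (hmax : ∀ n : ℕ, 1 ≤ n → ∀ K' ∈ simplex m,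
      elg X n K' ≤ ∫ ω, Real.log (1 + X 0 ω j))
    (K : Fin m → ℝ) (hK : K ∈ simplex m) (hKj : 0 < K j)
    (ε : ℝ) (hε : ε ∈ Set.Ioo 0 (Real.log (1 / K j))) :
    1 ≤ ⌈(1 / ε) * Real.log (1 / K j)⌉₊ ∧
    ∀ n : ℕ, ⌈(1 / ε) * Real.log (1 / K j)⌉₊ ≤ n →
      0 ≤ (∫ ω, Real.log (1 + X 0 ω j)) - elg X n K ∧
      (∫ ω, Real.log (1 + X 0 ω j)) - elg X n K ≤ ε := by
  obtain ⟨hε0, hεL⟩ := hε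
  obtain ⟨hK0, hK1⟩ := hK
  set L : ℝ := Real.log (1 / K j) with hLdef
  have hL0 : 0 < L := lt_trans hε0 hεL
  have hLneg : L = - Real.log (K j) := by rw [hLdef, one_div, Real.log_inv]
  set I : ℝ := ∫ ω, Real.log (1 + X 0 ω j) with hIdef
  -- constants for bounds
  set Mi : Fin m → ℝ := fun i => max (1 + Xmax i) (1 + Xmin i) with hMidef
  have hMin_pos : ∀ i, (0 : ℝ) < 1 + Xmin i := fun i => by linarith [hXmin i]
  have hMi_pos : ∀ i, 0 < Mi i := fun i =>
    lt_of_lt_of_le (hMin_pos i) (le_max_right _ _)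
  have hne : (Finset.univ : Finset (Fin m)).Nonempty := ⟨j, Finset.mem_univ j⟩
  set M : ℝ := Finset.univ.sup' hne Mi with hMdef
  have hM_ge : ∀ i, Mi i ≤ M := fun i => Finset.le_sup' Mi (Finset.mem_univ i)
  have hM_pos : 0 < M := lt_of_lt_of_le (hMi_pos j) (hM_ge j)
  -- single-factor log integrability and identical distribution
  set Cj : ℝ := |Real.log (1 + Xmin j)| + |Real.log (Mi j)| with hCjdef
  have hφmeas : ∀ k, Measurable (fun ω => Real.log (1 + X k ω j)) := fun k =>
    Real.measurable_log.comp (measurable_const.add ((measurable_pi_apply j).comp (hmeas k)))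
  have hφbound : ∀ k, ∀ᵐ ω ∂(ℙ : Measure Ω), ‖Real.log (1 + X k ω j)‖ ≤ Cj := by
    intro k
    filter_upwards [hbdd k] with ω hω
    obtain ⟨h1, h2⟩ := hω j
    have hx : (0 : ℝ) < 1 + X k ω j := by linarith [hMin_pos j]
    have hle : Real.log (1 + Xmin j) ≤ Real.log (1 + X k ω j) :=
      Real.log_le_log (hMin_pos j) (by linarith)
    have hge : Real.log (1 + X k ω j) ≤ Real.log (Mi j) :=
      Real.log_le_log hx (le_trans (by linarith) (le_max_left _ _))
    rw [Real.norm_eq_abs, abs_le]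
    constructor
    · have := neg_abs_le (Real.log (1 + Xmin j))
      have := abs_nonneg (Real.log (Mi j))
      linarith
    · have := le_abs_self (Real.log (Mi j))
      have := abs_nonneg (Real.log (1 + Xmin j))
      linarith
  have hφint : ∀ k, Integrable (fun ω => Real.log (1 + X k ω j)) :=
    fun k => (integrable_const Cj).mono' (hφmeas k).aestronglyMeasurable (hφbound k)
  have hφeq : ∀ k, (∫ ω, Real.log (1 + X k ω j)) = I := by
    intro k
    have hu : Measurable (fun v : Fin m → ℝ => Real.log (1 + v j)) :=
      Real.measurable_log.comp (measurable_const.add (measurable_pi_apply j))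
    have h := ((hident k).comp hu).integral_eq
    simpa [Function.comp] using h
  -- key estimate: for every n ≥ 1, I - elg X n K ≤ L / n
  have hkey : ∀ n : ℕ, 1 ≤ n → I - elg X n K ≤ L / n := by
    intro n hn1
    have hn0 : (0 : ℝ) < (n : ℝ) := by exact_mod_cast hn1
    -- the a.e. event where all bounds hold
    have hA : ∀ᵐ ω ∂(ℙ : Measure Ω), ∀ k, ∀ i, Xmin i ≤ X k ω i ∧ X k ω i ≤ Xmax i :=
      (ae_all_iff).2 hbdd
    -- pointwise facts on the good event
    have hpt : ∀ ω, (∀ k, ∀ i, Xmin i ≤ X k ω i ∧ X k ω i ≤ Xmax i) →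
        (∀ i, (1 + Xmin i) ^ n ≤ compoundReturn X n ω i ∧ compoundReturn X n ω i ≤ M ^ n) := by
      intro ω hω i
      constructor
      · calc (1 + Xmin i) ^ n = ∏ _k ∈ Finset.range n, (1 + Xmin i) := by
              rw [Finset.prod_const, Finset.card_range]
          _ ≤ ∏ k ∈ Finset.range n, (1 + X k ω i) :=
              Finset.prod_le_prod (fun k _ => (hMin_pos i).le)
                (fun k _ => by linarith [(hω k i).1])
      · calc compoundReturn X n ω i ≤ ∏ _k ∈ Finset.range n, M := by
              apply Finset.prod_le_prod
              · intro k _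
                have := (hω k i).1
                linarith [hMin_pos i]
              · intro k _
                have h2 := (hω k i).2
                have hmi : 1 + X k ω i ≤ Mi i :=
                  le_trans (by linarith) (le_max_left _ _)
                exact le_trans hmi (hM_ge i)
          _ = M ^ n := by rw [Finset.prod_const, Finset.card_range]
    have hRpos : ∀ ω, (∀ k, ∀ i, Xmin i ≤ X k ω i ∧ X k ω i ≤ Xmax i) →
        ∀ i, 0 < compoundReturn X n ω i := fun ω hω i =>
      lt_of_lt_of_le (pow_pos (hMin_pos i) n) ((hpt ω hω i).1)
    -- S : the portfolio value
    set S : Ω → ℝ := fun ω => ∑ i, K i * compoundReturn X n ω i with hSdef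
    have hSfacts : ∀ ω, (∀ k, ∀ i, Xmin i ≤ X k ω i ∧ X k ω i ≤ Xmax i) →
        K j * (1 + Xmin j) ^ n ≤ S ω ∧ K j * compoundReturn X n ω j ≤ S ω ∧ S ω ≤ M ^ n := by
      intro ω hω
      have hterm : K j * compoundReturn X n ω j ≤ S ω :=
        Finset.single_le_sum (f := fun i => K i * compoundReturn X n ω i)
          (fun i _ => mul_nonneg (hK0 i) (hRpos ω hω i).le) (Finset.mem_univ j)
      refine ⟨le_trans (mul_le_mul_of_nonneg_left ((hpt ω hω j).1) (hK0 j)) hterm, hterm, ?_⟩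
      calc S ω ≤ ∑ i, K i * M ^ n :=
            Finset.sum_le_sum (fun i _ =>
              mul_le_mul_of_nonneg_left ((hpt ω hω i).2) (hK0 i))
        _ = M ^ n := by rw [← Finset.sum_mul, hK1, one_mul]
    -- measurability of log S
    have hSmeas : Measurable S := by
      apply Finset.measurable_sum
      intro i _
      exact measurable_const.mul
        (Finset.measurable_prod _ (fun k _ =>
          measurable_const.add ((measurable_pi_apply i).comp (hmeas k))))
    have hfmeas : Measurable (fun ω => Real.log (S ω)) := Real.measurable_log.comp hSmeas
    set a : ℝ := K j * (1 + Xmin j) ^ n with hadef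
    have ha_pos : 0 < a := mul_pos hKj (pow_pos (hMin_pos j) n)
    set Cf : ℝ := |Real.log a| + |Real.log (M ^ n)| with hCfdef
    have hfbound : ∀ᵐ ω ∂(ℙ : Measure Ω), ‖Real.log (S ω)‖ ≤ Cf := by
      filter_upwards [hA] with ω hω
      obtain ⟨hlo, _, hhi⟩ := hSfacts ω hω
      have hSpos : 0 < S ω := lt_of_lt_of_le ha_pos hlo
      have h1 : Real.log a ≤ Real.log (S ω) := Real.log_le_log ha_pos hlo
      have h2 : Real.log (S ω) ≤ Real.log (M ^ n) := Real.log_le_log hSpos hhi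
      rw [Real.norm_eq_abs, abs_le]
      constructor
      · have := neg_abs_le (Real.log a)
        have := abs_nonneg (Real.log (M ^ n))
        linarith
      · have := le_abs_self (Real.log (M ^ n))
        have := abs_nonneg (Real.log a)
        linarith
    have hfint : Integrable (fun ω => Real.log (S ω)) :=
      (integrable_const Cf).mono' hfmeas.aestronglyMeasurable hfbound
    -- the comparison function h
    set h : Ω → ℝ := fun ω => Real.log (K j) + ∑ k ∈ Finset.range n, Real.log (1 + X k ω j)
      with hhdef
    have hhint : Integrable h :=
      (integrable_const (Real.log (K j))).add
        (integrable_finset_sum _ (fun k _ => hφint k))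
    have hhle : ∀ᵐ ω ∂(ℙ : Measure Ω), h ω ≤ Real.log (S ω) := by
      filter_upwards [hA] with ω hω
      have hfacpos : ∀ k ∈ Finset.range n, (0 : ℝ) < 1 + X k ω j := fun k _ => by
        have := (hω k j).1; linarith [hMin_pos j]
      have hRj : 0 < compoundReturn X n ω j := hRpos ω hω j
      have heq : h ω = Real.log (K j * compoundReturn X n ω j) := by
        rw [hhdef]
        simp only
        rw [Real.log_mul hKj.ne' hRj.ne', compoundReturn,
          Real.log_prod (fun k hk => (hfacpos k hk).ne')]
      rw [heq]
      exact Real.log_le_log (mul_pos hKj hRj) (hSfacts ω hω).2.1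
    have hint_le : (∫ ω, h ω) ≤ ∫ ω, Real.log (S ω) := integral_mono_ae hhint hfint hhle
    have hinth : (∫ ω, h ω) = Real.log (K j) + n * I := by
      rw [hhdef]
      rw [integral_add (integrable_const _) (integrable_finset_sum _ (fun k _ => hφint k))]
      rw [integral_const]
      simp only [probReal_univ, one_smul]
      rw [integral_finset_sum _ (fun k _ => hφint k)]
      congr 1
      rw [Finset.sum_congr rfl (fun k _ => hφeq k), Finset.sum_const, Finset.card_range,
        nsmul_eq_mul]
    -- put it together
    have helg : elg X n K = (n : ℝ)⁻¹ * ∫ ω, Real.log (S ω) := rfl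
    have hmain : Real.log (K j) + n * I ≤ ∫ ω, Real.log (S ω) := hinth ▸ hint_le
    have : (n : ℝ)⁻¹ * (Real.log (K j) + n * I) ≤ elg X n K := by
      rw [helg]
      exact mul_le_mul_of_nonneg_left hmain (by positivity)
    have hexp : (n : ℝ)⁻¹ * (Real.log (K j) + n * I) = (n : ℝ)⁻¹ * Real.log (K j) + I := by
      field_simp
    rw [hexp] at this
    have : I - elg X n K ≤ - ((n : ℝ)⁻¹ * Real.log (K j)) := by linarith
    calc I - elg X n K ≤ - ((n : ℝ)⁻¹ * Real.log (K j)) := this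
      _ = L / n := by rw [hLneg]; field_simp
  -- ceiling is ≥ 1
  have hceil : 1 ≤ ⌈(1 / ε) * L⌉₊ := Nat.one_le_ceil_iff.2 (by positivity)
  refine ⟨hceil, ?_⟩
  intro n hn
  have hn1 : 1 ≤ n := le_trans hceil hn
  have hn0 : (0 : ℝ) < (n : ℝ) := by exact_mod_cast hn1
  constructor
  · have := hmax n hn1 K ⟨hK0, hK1⟩
    linarith
  · have h1 : (1 / ε) * L ≤ (n : ℝ) :=
      le_trans (Nat.le_ceil _) (by exact_mod_cast hn)
    have h2 : L ≤ ε * n := by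
      have := mul_le_mul_of_nonneg_left h1 hε0.le
      calc L = ε * ((1 / ε) * L) := by field_simp
        _ ≤ ε * n := this
    have h3 : L / n ≤ ε := by
      rw [div_le_iff₀ hn0]; linarith
    exact le_trans (hkey n hn1) h3
end

section
/- Suppose asset j is dominant and let K ∈ 𝒦 with K_j ∈ (0,1). Then for every n ≥ 1 the optimality gap admits the exact decomposition g_1* − g_n(K) = (1/n)·log(1/K_j) − (1/n)·E[ log( 1 + Σ_{i ≠ j} (K_i·R_{n,i}) / (K_j·R_{n,j}) ) ], where g_1* = E[log(1 + X_j(0))]. -/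
open MeasureTheory ProbabilityTheory Filter Topology Finset Real

private lemma integrable_of_ae_bound {Ω : Type*} [MeasureSpace Ω]
    [IsProbabilityMeasure (ℙ : Measure Ω)] {f : Ω → ℝ} (hf : Measurable f) {c : ℝ}
    (h : ∀ᵐ ω ∂(ℙ : Measure Ω), |f ω| ≤ c) : Integrable f ℙ :=
  (integrable_const c).mono' hf.aestronglyMeasurable h

/-- **Exact decomposition of the optimality gap.** If asset `j` is dominant and `K ∈ 𝒦` with
`K_j ∈ (0,1)`, then for every `n ≥ 1`,
`g_1^* - g_n(K) = (1/n) log(1/K_j) - (1/n) E[log (1 + Σ_{i≠j} K_i R_{n,i} / (K_j R_{n,j}))]`. -/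
theorem gap_exact_decomposition
    {Ω : Type*} [MeasureSpace Ω] [IsProbabilityMeasure (ℙ : Measure Ω)]
    {m : ℕ} (hm : 2 ≤ m)
    (X : ℕ → Ω → Fin m → ℝ)
    (hmeas : ∀ k, Measurable (X k))
    (hiid : iIndepFun X ℙ)
    (hident : ∀ k, IdentDistrib (X k) (X 0) ℙ ℙ)
    (Xmin Xmax : Fin m → ℝ)
    (hXmin : ∀ i, -1 < Xmin i)
    (hbdd : ∀ k, ∀ᵐ ω ∂(ℙ : Measure Ω), ∀ i, Xmin i ≤ X k ω i ∧ X k ω i ≤ Xmax i)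
    (j : Fin m)
    (hdom : ∀ i, i ≠ j → ∫ ω, (1 + X 0 ω i) / (1 + X 0 ω j) ≤ 1)
    (K : Fin m → ℝ) (hK : K ∈ simplex m) (hKj : K j ∈ Set.Ioo (0 : ℝ) 1) :
    ∀ n : ℕ, 1 ≤ n →
      (∫ ω, Real.log (1 + X 0 ω j)) - elg X n K =
        (n : ℝ)⁻¹ * Real.log (1 / K j) -
          (n : ℝ)⁻¹ * ∫ ω, Real.log (1 + ∑ i ∈ Finset.univ.erase j,
            (K i * compoundReturn X n ω i) / (K j * compoundReturn X n ω j)) := by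
  intro n hn
  obtain ⟨hK0, hKsum⟩ := hK
  obtain ⟨hKj0, hKj1⟩ := hKj
  have hn0 : (n : ℝ) ≠ 0 := Nat.cast_ne_zero.mpr (by omega)
  -- notation
  set R : Ω → Fin m → ℝ := fun ω => compoundReturn X n ω with hRdef
  set S : Ω → ℝ := fun ω => ∑ i ∈ Finset.univ.erase j,
      (K i * R ω i) / (K j * R ω j) with hSdef
  -- positivity of bounds
  have ha : ∀ i, (0:ℝ) < 1 + Xmin i := fun i => by linarith [hXmin i]
  have hab : ∀ i, (1:ℝ) + Xmin i ≤ 1 + Xmax i := by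
    intro i
    obtain ⟨ω, hω⟩ := (hbdd 0).exists
    linarith [(hω i).1, (hω i).2]
  have hbmax : ∀ i, (0:ℝ) < 1 + Xmax i := fun i => lt_of_lt_of_le (ha i) (hab i)
  -- measurability
  have hXm : ∀ k i, Measurable (fun ω => X k ω i) := fun k i =>
    (measurable_pi_apply i).comp (hmeas k)
  have hRm : ∀ i, Measurable (fun ω => R ω i) := by
    intro i
    exact Finset.measurable_prod _ (fun k _ => measurable_const.add (hXm k i))
  have hSm : Measurable S := by
    apply Finset.measurable_sum
    intro i _
    exact (measurable_const.mul (hRm i)).div (measurable_const.mul (hRm j))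
  -- a.e. bounds
  have hae : ∀ᵐ ω ∂(ℙ : Measure Ω), ∀ k, ∀ i, Xmin i ≤ X k ω i ∧ X k ω i ≤ Xmax i :=
    ae_all_iff.mpr hbdd
  -- per-period log integrability and identical distribution
  have hint1 : ∀ k, Integrable (fun ω => Real.log (1 + X k ω j)) ℙ := by
    intro k
    apply integrable_of_ae_bound ((measurable_const.add (hXm k j)).log)
      (c := max |Real.log (1 + Xmin j)| |Real.log (1 + Xmax j)|)
    filter_upwards [hbdd k] with ω hω
    have h1 := (hω j).1
    have h2 := (hω j).2
    have hl : Real.log (1 + Xmin j) ≤ Real.log (1 + X k ω j) :=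
      Real.log_le_log (ha j) (by linarith)
    have hr : Real.log (1 + X k ω j) ≤ Real.log (1 + Xmax j) :=
      Real.log_le_log (by linarith [ha j]) (by linarith)
    exact abs_le_max_abs_abs hl hr
  have hid : ∀ k, (∫ ω, Real.log (1 + X k ω j)) = ∫ ω, Real.log (1 + X 0 ω j) := by
    intro k
    have hg : Measurable (fun v : Fin m → ℝ => Real.log (1 + v j)) :=
      (measurable_const.add (measurable_pi_apply j)).log
    exact ((hident k).comp hg).integral_eq
  -- bound on S
  set C : ℝ := ∑ i ∈ Finset.univ.erase j,
      (K i * (1 + Xmax i) ^ n) / (K j * (1 + Xmin j) ^ n) with hCdef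
  have hKRj_pos : ∀ᵐ ω ∂(ℙ : Measure Ω), (∀ i, 0 < R ω i ∧ R ω i ≤ (1 + Xmax i)^n)
      ∧ (1 + Xmin j)^n ≤ R ω j := by
    filter_upwards [hae] with ω hω
    constructor
    · intro i
      constructor
      · exact Finset.prod_pos (fun k _ => by linarith [(hω k i).1, ha i])
      · calc (∏ k ∈ Finset.range n, (1 + X k ω i))
              ≤ ∏ _k ∈ Finset.range n, (1 + Xmax i) :=
            Finset.prod_le_prod (fun k _ => by linarith [(hω k i).1, ha i])
              (fun k _ => by linarith [(hω k i).2])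
          _ = (1 + Xmax i) ^ n := by rw [Finset.prod_const, Finset.card_range]
    · calc (1 + Xmin j)^n = ∏ _k ∈ Finset.range n, (1 + Xmin j) := by
            rw [Finset.prod_const, Finset.card_range]
        _ ≤ ∏ k ∈ Finset.range n, (1 + X k ω j) :=
            Finset.prod_le_prod (fun k _ => le_of_lt (ha j))
              (fun k _ => by linarith [(hω k j).1])
  have hSbound : ∀ᵐ ω ∂(ℙ : Measure Ω), 0 ≤ S ω ∧ S ω ≤ C := by
    filter_upwards [hKRj_pos] with ω hω
    obtain ⟨hRi, hRj⟩ := hω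
    have hden : 0 < K j * R ω j := mul_pos hKj0 (hRi j).1
    constructor
    · apply Finset.sum_nonneg
      intro i _
      exact div_nonneg (mul_nonneg (hK0 i) (le_of_lt (hRi i).1)) (le_of_lt hden)
    · apply Finset.sum_le_sum
      intro i _
      exact div_le_div₀ (mul_nonneg (hK0 i) (pow_nonneg (le_of_lt (hbmax i)) n))
        (mul_le_mul_of_nonneg_left (hRi i).2 (hK0 i))
        (mul_pos hKj0 (pow_pos (ha j) n)) (mul_le_mul_of_nonneg_left hRj (le_of_lt hKj0))
  have hC0 : 0 ≤ C := by
    apply Finset.sum_nonneg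
    intro i _
    exact div_nonneg (mul_nonneg (hK0 i) (pow_nonneg (le_of_lt (hbmax i)) n))
      (le_of_lt (mul_pos hKj0 (pow_pos (ha j) n)))
  -- integrability of log(1+S)
  have hintT : Integrable (fun ω => Real.log (1 + S ω)) ℙ := by
    apply integrable_of_ae_bound ((measurable_const.add hSm).log) (c := Real.log (1 + C))
    filter_upwards [hSbound] with ω hω
    show |Real.log (1 + S ω)| ≤ Real.log (1 + C)
    rw [abs_of_nonneg]
    · exact Real.log_le_log (by linarith [hω.1]) (by linarith [hω.2])
    · have := Real.log_le_log (by norm_num) (by linarith [hω.1] : (1:ℝ) ≤ 1 + S ω)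
      simpa using this
  -- the a.e. pointwise decomposition
  have hkey : (fun ω => Real.log (∑ i, K i * R ω i)) =ᵐ[ℙ]
      (fun ω => Real.log (K j) + (∑ k ∈ Finset.range n, Real.log (1 + X k ω j))
        + Real.log (1 + S ω)) := by
    filter_upwards [hae, hKRj_pos, hSbound] with ω hω hR hS
    obtain ⟨hRi, _⟩ := hR
    have hden : (0:ℝ) < K j * R ω j := mul_pos hKj0 (hRi j).1
    have hsum : (∑ i, K i * R ω i) = K j * R ω j * (1 + S ω) := by
      rw [mul_add, mul_one, Finset.mul_sum]
      rw [← Finset.add_sum_erase _ (fun i => K i * R ω i) (Finset.mem_univ j)]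
      congr 1
      apply Finset.sum_congr rfl
      intro i _
      rw [mul_comm (K j * R ω j), div_mul_cancel₀ _ (ne_of_gt hden)]
    rw [hsum, Real.log_mul (ne_of_gt hden) (by linarith [hS.1]),
      Real.log_mul (ne_of_gt hKj0) (ne_of_gt (hRi j).1)]
    have hRlog : Real.log (R ω j) = ∑ k ∈ Finset.range n, Real.log (1 + X k ω j) := by
      apply Real.log_prod
      intro k _
      exact ne_of_gt (by linarith [(hω k j).1, ha j])
    rw [hRlog]
  -- compute the integral
  have hintL : Integrable (fun ω => ∑ k ∈ Finset.range n, Real.log (1 + X k ω j)) ℙ :=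
    integrable_finset_sum _ (fun k _ => hint1 k)
  have hmain : (∫ ω, Real.log (∑ i, K i * R ω i)) =
      Real.log (K j) + (n : ℝ) * (∫ ω, Real.log (1 + X 0 ω j))
        + ∫ ω, Real.log (1 + S ω) := by
    rw [integral_congr_ae hkey]
    have e1 : (∫ ω, (Real.log (K j) + (∑ k ∈ Finset.range n, Real.log (1 + X k ω j))
        + Real.log (1 + S ω))) =
        (∫ ω, (Real.log (K j) + ∑ k ∈ Finset.range n, Real.log (1 + X k ω j)))
          + ∫ ω, Real.log (1 + S ω) :=
      integral_add ((integrable_const _).add hintL) hintT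
    have e2 : (∫ ω, (Real.log (K j) + ∑ k ∈ Finset.range n, Real.log (1 + X k ω j))) =
        (∫ _ω : Ω, Real.log (K j)) + ∫ ω, ∑ k ∈ Finset.range n, Real.log (1 + X k ω j) :=
      integral_add (integrable_const _) hintL
    rw [e1, e2, integral_const]
    simp only [Measure.real, measure_univ, ENNReal.toReal_one, smul_eq_mul, one_mul]
    congr 1
    congr 1
    rw [integral_finset_sum _ (fun k _ => hint1 k)]
    rw [Finset.sum_congr rfl (fun k _ => hid k), Finset.sum_const, Finset.card_range]
    simp [mul_comm]
  -- finish
  have helg : elg X n K = (n:ℝ)⁻¹ * (Real.log (K j) + (n : ℝ) * (∫ ω, Real.log (1 + X 0 ω j))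
      + ∫ ω, Real.log (1 + S ω)) := by
    rw [elg, ← hmain]
  have hIeq : (∫ ω, Real.log (1 + ∑ i ∈ Finset.univ.erase j,
      (K i * compoundReturn X n ω i) / (K j * compoundReturn X n ω j))) =
      ∫ ω, Real.log (1 + S ω) := rfl
  rw [helg, hIeq, one_div, Real.log_inv]
  field_simp
  ring
end
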